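/- Let α, c be real with 0 < α < 1/√10 and c > 1/4, and define λ_α : ℝ → ℂ by λ_α(k) = (ik − α)·(c − (ik − α)² + (ik − α)⁴). Then the map k ↦ Im(λ_α(k)) is strictly increasing on ℝ (its derivative c − 3α² + 5α⁴ + 3k²(1 − 10α²) + 5k⁴ is positive for all k); in particular k ↦ λ_α(k) is injective, so the dispersion curve is a simple (non-self-intersecting) curve. -/

import Mathlib

open Complex Real

/-- For `0 < α < 1/√10` and `c > 1/4`, the imaginary part of the dispersion curve
`λ_α(k) = (ik - α)(c - (ik-α)² + (ik-α)⁴)` is strictly increasing in `k`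
(its derivative `c - 3α² + 5α⁴ + 3k²(1-10α²) + 5k⁴` is positive), so `k ↦ λ_α(k)`
is injective: the dispersion curve is a simple curve. -/
theorem dispersion_curve_simple (α c : ℝ)
    (hα0 : 0 < α) (hα : α < 1 / Real.sqrt 10) (hc : 1 / 4 < c) :
    (∀ k : ℝ,
      0 < c - 3 * α ^ 2 + 5 * α ^ 4 + 3 * k ^ 2 * (1 - 10 * α ^ 2) + 5 * k ^ 4) ∧
    StrictMono (fun k : ℝ =>
      ((Complex.I * k - α) *
        (c - (Complex.I * k - α) ^ 2 + (Complex.I * k - α) ^ 4)).im) ∧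
    Function.Injective (fun k : ℝ =>
      (Complex.I * k - α) *
        (c - (Complex.I * k - α) ^ 2 + (Complex.I * k - α) ^ 4)) := by
  -- first, α² < 1/10
  have h10 : (0:ℝ) < Real.sqrt 10 := Real.sqrt_pos.mpr (by norm_num)
  have hα2 : α ^ 2 < 1 / 10 := by
    have h1 : α ^ 2 < (1 / Real.sqrt 10) ^ 2 :=
      pow_lt_pow_left₀ hα hα0.le (by norm_num)
    have h2 : (1 / Real.sqrt 10) ^ 2 = 1 / 10 := by
      rw [div_pow, one_pow, Real.sq_sqrt (by norm_num : (10:ℝ) ≥ 0)]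
    linarith [h1, h2.symm ▸ h1]
  have hpos : ∀ k : ℝ,
      0 < c - 3 * α ^ 2 + 5 * α ^ 4 + 3 * k ^ 2 * (1 - 10 * α ^ 2) + 5 * k ^ 4 := by
    intro k
    have hk2 : (0:ℝ) ≤ k ^ 2 := sq_nonneg k
    have hk4 : (0:ℝ) ≤ k ^ 4 := by positivity
    have h1 : (0:ℝ) < 1 / 10 - α ^ 2 := by linarith
    have h2 : (0:ℝ) < 1 / 2 - α ^ 2 := by linarith
    have h3 : (0:ℝ) < (1 / 10 - α ^ 2) * (1 / 2 - α ^ 2) := mul_pos h1 h2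
    have h4 : (0:ℝ) ≤ 3 * k ^ 2 * (1 - 10 * α ^ 2) := by
      apply mul_nonneg (by positivity); linarith
    nlinarith [h3, h4, hk4]
  have him : ∀ k : ℝ,
        ((Complex.I * k - α) *
          (c - (Complex.I * k - α) ^ 2 + (Complex.I * k - α) ^ 4)).im
        = (c - 3 * α ^ 2 + 5 * α ^ 4) * k + (1 - 10 * α ^ 2) * k ^ 3 + k ^ 5 := by
      intro k
      simp [Complex.mul_im, Complex.mul_re, Complex.sub_re, Complex.sub_im,
        Complex.add_re, Complex.add_im, Complex.ofReal_re, Complex.ofReal_im,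
        Complex.I_re, Complex.I_im, pow_succ, pow_zero]
      ring
  have hderiv : ∀ k : ℝ, HasDerivAt
      (fun k : ℝ => (c - 3 * α ^ 2 + 5 * α ^ 4) * k + (1 - 10 * α ^ 2) * k ^ 3 + k ^ 5)
      (c - 3 * α ^ 2 + 5 * α ^ 4 + 3 * k ^ 2 * (1 - 10 * α ^ 2) + 5 * k ^ 4) k := by
    intro k
    have h1 : HasDerivAt (fun k : ℝ => (c - 3 * α ^ 2 + 5 * α ^ 4) * k)
        (c - 3 * α ^ 2 + 5 * α ^ 4) k := by
      simpa using (hasDerivAt_id k).const_mul (c - 3 * α ^ 2 + 5 * α ^ 4)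
    have h2 : HasDerivAt (fun k : ℝ => (1 - 10 * α ^ 2) * k ^ 3)
        ((1 - 10 * α ^ 2) * (3 * k ^ 2)) k := by
      simpa using (hasDerivAt_pow 3 k).const_mul (1 - 10 * α ^ 2)
    have h3 : HasDerivAt (fun k : ℝ => k ^ 5) (5 * k ^ 4) k := by
      simpa using hasDerivAt_pow 5 k
    have := (h1.add h2).add h3
    exact this.congr_deriv (by ring)
  have hmono : StrictMono
      (fun k : ℝ => (c - 3 * α ^ 2 + 5 * α ^ 4) * k + (1 - 10 * α ^ 2) * k ^ 3 + k ^ 5) := by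
    apply strictMono_of_deriv_pos
    intro k
    rw [(hderiv k).deriv]
    exact hpos k
  have heq : (fun k : ℝ =>
      ((Complex.I * k - α) *
        (c - (Complex.I * k - α) ^ 2 + (Complex.I * k - α) ^ 4)).im)
      = (fun k : ℝ => (c - 3 * α ^ 2 + 5 * α ^ 4) * k + (1 - 10 * α ^ 2) * k ^ 3 + k ^ 5) :=
    funext him
  have key : StrictMono (fun k : ℝ =>
      ((Complex.I * k - α) *
        (c - (Complex.I * k - α) ^ 2 + (Complex.I * k - α) ^ 4)).im) := by
    rw [heq]; exact hmono
  exact ⟨hpos, key, fun a b hab => key.injective (congrArg Complex.im hab)⟩
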